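/- If G is a topological group in which all countable subgroups are closed, then the closure of every countable subset of G is countable. -/

import Mathlib

theorem countable_subgroup_closure {G : Type*} [Group G] {S : Set G}
    (hS : S.Countable) : ((Subgroup.closure S : Subgroup G) : Set G).Countable := by
  have hT : (S ∪ S⁻¹).Countable := by
    refine hS.union ?_
    have : (S⁻¹ : Set G) = Inv.inv '' S := by
      ext x; simp [Set.mem_inv, eq_comm, inv_eq_iff_eq_inv, eq_inv_iff_mul_eq_one]
    rw [this]; exact hS.image _
  haveI : Countable (S ∪ S⁻¹ : Set G) := hT.to_subtype
  have hsub : ((Subgroup.closure S : Subgroup G) : Set G) ⊆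
      Set.range (fun l : List (S ∪ S⁻¹ : Set G) => (l.map Subtype.val).prod) := by
    intro x hx
    have hx' : x ∈ Submonoid.closure (S ∪ S⁻¹) := by
      rw [← Subgroup.closure_toSubmonoid]; exact hx
    obtain ⟨l, hl, rfl⟩ := Submonoid.exists_list_of_mem_closure hx'
    refine ⟨l.attach.map fun y => ⟨y.1, hl y.1 y.2⟩, ?_⟩
    simp [List.map_map, Function.comp_def]
  exact (Set.countable_range _).mono hsub

/-- If all countable subgroups of a topological group are closed, then the
closure of every countable subset is countable. -/
theorem closure_countable_of_countable_subgroups_closed {G : Type*} [Group G]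
    [TopologicalSpace G] [IsTopologicalGroup G] [T2Space G]
    (h : ∀ H : Subgroup G, (H : Set G).Countable → IsClosed (H : Set G)) :
    ∀ S : Set G, S.Countable → (closure S).Countable := by
  intro S hS
  have hc := countable_subgroup_closure hS
  have hcl := h _ hc
  exact hc.mono (closure_minimal Subgroup.subset_closure hcl)
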